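/- Suppose the coordinates are connected (i ~ j for all i,j) and no connecting coordinate exists. Let S be the set of indices strongly connected to every other index. Let B be a nonempty subset of S and j ∉ B be such that σ_{ij} is constant for every i ∈ B, and assume B ∪ {j} ≠ {1,…,n}. Then j ∈ S, and there exists k ∉ B ∪ {j} such that σ_{ik} is constant for every i ∈ B ∪ {j}. -/
import Mathlib


/-- (Claim in the proof that `M ≠ ∅`.) Suppose the coordinates
are connected and there is no connecting coordinate. Let `S` be the set of
indices strongly connected to every other index. If `B ⊆ S` is nonempty,
`j ∉ B`, `σ i j` is constant for every `i ∈ B`, and `B ∪ {j}` is not the whole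
index set, then `j ∈ S` and there is `k ∉ B ∪ {j}` with `σ i k` constant for
every `i ∈ B ∪ {j}`. -/
theorem claim_enlarge_strongly_connected_set (n : ℕ) (hn : 3 ≤ n)
    (σ σ' : Fin n → Fin n → ℝ → ℝ)
    (hderiv : ∀ i j : Fin n, i ≠ j → ∀ x : ℝ, HasDerivAt (σ i j) (σ' i j x) x)
    (hne : ∀ i j : Fin n, i ≠ j → ∀ s t : ℝ, σ i j s + σ j i t ≠ 0)
    (heq : ∀ i j k : Fin n, i ≠ j → j ≠ k → i ≠ k → ∀ s t u : ℝ,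
      σ' j i t * σ' k i u * (σ j k t + σ k j u)
        - σ' j i t * σ' k j u * (σ k i u + σ i k s)
        - σ' k i u * σ' j k t * (σ i j s + σ j i t) = 0)
    (hconn : ∀ i j : Fin n,
      i = j ∨ ((∃ x, σ' i j x ≠ 0) ∨ (∃ x, σ' j i x ≠ 0)) ∨
        ∃ k, k ≠ i ∧ k ≠ j ∧ (∃ x, σ' k i x ≠ 0) ∧ (∃ x, σ' k j x ≠ 0))
    (hnoM : ¬ ∃ a : Fin n, ∀ j : Fin n, j ≠ a → ∃ x, σ' a j x ≠ 0)
    (S : Set (Fin n))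
    (hS : S = {i : Fin n | ∀ j : Fin n, j ≠ i →
      ((∃ x, σ' i j x ≠ 0) ∨ (∃ x, σ' j i x ≠ 0))})
    (B : Set (Fin n)) (hBS : B ⊆ S) (hB : B.Nonempty)
    (j : Fin n) (hj : j ∉ B)
    (hconst : ∀ i ∈ B, ∀ x : ℝ, σ' i j x = 0)
    (hnotall : B ∪ {j} ≠ Set.univ) :
    j ∈ S ∧ ∃ k : Fin n, k ∉ B ∪ {j} ∧
      ∀ i ∈ B ∪ {j}, ∀ x : ℝ, σ' i k x = 0 := by
  subst hS
  -- every `b ∈ B` has `σ' j b` not identically zero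
  have hjb_nc : ∀ b ∈ B, ∃ x, σ' j b x ≠ 0 := by
    intro b hb
    have hjb : j ≠ b := fun h => hj (h ▸ hb)
    rcases hBS hb j hjb with h | h
    · obtain ⟨x, hx⟩ := h
      exact absurd (hconst b hb x) hx
    · exact h
  -- Lemma A: from the functional equation with one identically-zero derivative
  have lemA : ∀ a b c : Fin n, a ≠ b → b ≠ c → a ≠ c →
      (∀ x, σ' c a x = 0) → (∃ u, σ' c b u ≠ 0) → ∀ t, σ' b a t = 0 := by
    intro a b c hab hbc hac h0 ⟨u, hu⟩ t
    have h := heq a b c hab hbc hac 0 t u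
    rw [h0 u] at h
    simp only [zero_mul, mul_zero, zero_sub, sub_zero, neg_eq_zero] at h
    have hsum : σ c a u + σ a c 0 ≠ 0 := hne c a (Ne.symm hac) u 0
    rcases mul_eq_zero.mp h with h' | h'
    · rcases mul_eq_zero.mp h' with h'' | h''
      · exact h''
      · exact absurd h'' hu
    · exact absurd h' hsum
  -- Lemma B: two-way constant pair kills double nonconstancy
  have lemB : ∀ a b c : Fin n, a ≠ b → b ≠ c → a ≠ c →
      (∀ x, σ' b c x = 0) → (∀ x, σ' c b x = 0) →
      (∃ t, σ' b a t ≠ 0) → (∃ u, σ' c a u ≠ 0) → False := by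
    intro a b c hab hbc hac h1 h2 ⟨t, ht⟩ ⟨u, hu⟩
    have h := heq a b c hab hbc hac 0 t u
    rw [h1 t, h2 u] at h
    simp only [zero_mul, mul_zero, sub_zero] at h
    have hsum : σ b c t + σ c b u ≠ 0 := hne b c hbc t u
    exact (mul_ne_zero (mul_ne_zero ht hu) hsum) h
  -- Lemma C: used to propagate constancy to the new coordinate
  have lemC : ∀ b m : Fin n, b ≠ m → m ≠ j → b ≠ j →
      (∀ x, σ' j m x = 0) → ∀ u0 : ℝ, σ' j b u0 ≠ 0 → ∀ t0 : ℝ, σ' m j t0 ≠ 0 →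
      ∀ x, σ' b m x = 0 := by
    intro b m hbm hmj hbj h0 u0 hu0 t0 ht0
    have key : ∀ s : ℝ, σ b m s = σ b m 0 := by
      intro s
      have h1 := heq b m j hbm hmj hbj s t0 u0
      have h2 := heq b m j hbm hmj hbj 0 t0 u0
      rw [h0 u0] at h1 h2
      simp only [zero_mul, mul_zero, sub_zero] at h1 h2
      have h3 : σ' j b u0 * σ' m j t0 * (σ b m s + σ m b t0)
          = σ' j b u0 * σ' m j t0 * (σ b m 0 + σ m b t0) := by linarith
      have h4 := mul_left_cancel₀ (mul_ne_zero hu0 ht0) h3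
      linarith
    intro x
    have hd := hderiv b m hbm x
    have hcf : σ b m = fun _ => σ b m 0 := funext key
    rw [hcf] at hd
    exact hd.unique (hasDerivAt_const x _)
  -- Part 1 : j ∈ S
  have hjS : ∀ l : Fin n, l ≠ j → (∃ x, σ' j l x ≠ 0) ∨ (∃ x, σ' l j x ≠ 0) := by
    intro l hlj
    by_cases hlB : l ∈ B
    · exact Or.inl (hjb_nc l hlB)
    · by_contra hcon
      push_neg at hcon
      obtain ⟨h1, h2⟩ := hcon
      obtain ⟨b, hb⟩ := hB
      have hbj : b ≠ j := fun h => hj (h ▸ hb)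
      have hlb : l ≠ b := fun h => hlB (h ▸ hb)
      have hbl0 : ∀ t, σ' b l t = 0 := lemA l b j hlb hbj hlj h1 (hjb_nc b hb)
      have hlb_nc : ∃ x, σ' l b x ≠ 0 := by
        rcases hBS hb l hlb with h | h
        · obtain ⟨x, hx⟩ := h
          exact absurd (hbl0 x) hx
        · exact h
      exact lemB b j l hbj (Ne.symm hlj) (Ne.symm hlb) h1 h2 (hjb_nc b hb) hlb_nc
  refine ⟨hjS, ?_⟩
  -- Part 2 : find the new coordinate
  have hx : ¬ ∀ l : Fin n, l ≠ j → ∃ x, σ' j l x ≠ 0 := fun h => hnoM ⟨j, h⟩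
  push_neg at hx
  obtain ⟨m, hmj, hjm0⟩ := hx
  have hmB : m ∉ B := by
    intro hmB
    obtain ⟨x, hx'⟩ := hjb_nc m hmB
    exact hx' (hjm0 x)
  have hmj_nc : ∃ x, σ' m j x ≠ 0 := by
    rcases hjS m hmj with h | h
    · obtain ⟨x, hx'⟩ := h
      exact absurd (hjm0 x) hx'
    · exact h
  refine ⟨m, ?_, ?_⟩
  · intro hmem
    rcases hmem with h | h
    · exact hmB h
    · exact hmj (Set.mem_singleton_iff.mp h)
  · intro i hi x
    rcases hi with hiB | hij
    · obtain ⟨u0, hu0⟩ := hjb_nc i hiB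
      obtain ⟨t0, ht0⟩ := hmj_nc
      have him : i ≠ m := fun h => hmB (h ▸ hiB)
      have hij' : i ≠ j := fun h => hj (h ▸ hiB)
      exact lemC i m him hmj hij' hjm0 u0 hu0 t0 ht0 x
    · rw [Set.mem_singleton_iff] at hij
      subst hij
      exact hjm0 x
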